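/- For every complex number q with |q| < 1, ∑_{n=0}^∞ q^{n(n+1)/2} = (q²;q²)_∞ / (q;q²)_∞. -/

import Mathlib

open scoped BigOperators

/-- The infinite q-Pochhammer symbol `(a; q)_∞ = ∏_{k=0}^∞ (1 - a qᵏ)`. -/
noncomputable def qPochInf (a q : ℂ) : ℂ := ∏' k : ℕ, (1 - a * q ^ k)

open Filter Finset Topology

namespace GaussAux

/-- Gaussian binomial coefficient as a function of the base `u`. -/
noncomputable def gb (u : ℂ) : ℕ → ℕ → ℂ
  | _, 0 => 1
  | 0, _+1 => 0
  | n+1, k+1 => gb u n k + u ^ (k+1) * gb u n (k+1)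

variable (u : ℂ)

@[simp] lemma gb_zero_right (n : ℕ) : gb u n 0 = 1 := by cases n <;> rfl

@[simp] lemma gb_zero_left (k : ℕ) : gb u 0 (k+1) = 0 := rfl

lemma gb_succ (n k : ℕ) : gb u (n+1) (k+1) = gb u n k + u ^ (k+1) * gb u n (k+1) := rfl

lemma gb_eq_zero : ∀ {n k : ℕ}, n < k → gb u n k = 0 := by
  intro n
  induction n with
  | zero => intro k hk; match k, hk with | (j+1), _ => rfl
  | succ n ih =>
    intro k hk
    match k, hk with
    | (k+1), hk =>
      rw [gb_succ, ih (by omega), ih (by omega)]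
      ring

@[simp] lemma gb_diag (n : ℕ) : gb u n n = 1 := by
  induction n with
  | zero => rfl
  | succ n ih => rw [gb_succ, ih, gb_eq_zero u (by omega)]; ring

lemma gb_R2 : ∀ n k : ℕ, k ≤ n → gb u (n+1) (k+1) = u ^ (n-k) * gb u n k + gb u n (k+1) := by
  intro n
  induction n with
  | zero =>
    intro k hk; interval_cases k
    simp [gb_succ, show gb u 0 1 = 0 from rfl]
  | succ n ih =>
    intro k hk
    cases k with
    | zero =>
      have hA := gb_succ u (n+1) 0
      have hB := gb_succ u n 0
      have hD := ih 0 (by omega)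
      simp only [Nat.sub_zero, gb_zero_right] at hA hB hD ⊢
      linear_combination hA + u * hD - hB
    | succ k =>
      rcases Nat.lt_or_ge k n with hkn | hkn
      · obtain ⟨m, rfl⟩ : ∃ m, n = k + (m + 1) := ⟨n - k - 1, by omega⟩
        have hA := gb_succ u (k + (m+1) + 1) (k+1)
        have hB := gb_succ u (k + (m+1)) k
        have hC := gb_succ u (k + (m+1)) (k+1)
        have hD := ih k (by omega)
        have hE := ih (k+1) (by omega)
        have e1 : k + (m + 1) + 1 - (k + 1) = m + 1 := by omega
        have e2 : k + (m + 1) - k = m + 1 := by omega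
        have e3 : k + (m + 1) - (k + 1) = m := by omega
        rw [e1] at *
        rw [e2] at hD
        rw [e3] at hE
        linear_combination hA + u^(k+2) * hE - u^(m+1) * hB - hC + hD
      · obtain rfl : k = n := by omega
        have hz : gb u (k+1) (k+1+1) = 0 := gb_eq_zero u (by omega)
        simp [hz]

/-- partial products of `(u;u)`. -/
noncomputable def Pprod (u : ℂ) (N : ℕ) : ℂ := ∏ i ∈ range N, (1 - u ^ (i+1))

lemma Pprod_succ (N : ℕ) : Pprod u (N+1) = Pprod u N * (1 - u ^ (N+1)) :=
  prod_range_succ _ _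

@[simp] lemma Pprod_zero : Pprod u 0 = 1 := rfl

lemma gb_mul_Pprod : ∀ n k : ℕ, k ≤ n →
    gb u n k * (Pprod u k * Pprod u (n-k)) = Pprod u n := by
  intro n
  induction n with
  | zero => intro k hk; interval_cases k; simp
  | succ n ih =>
    intro k hk
    cases k with
    | zero => simp
    | succ k =>
      rcases Nat.lt_or_ge k n with hkn | hkn
      · obtain ⟨m, rfl⟩ : ∃ m, n = k + (m + 1) := ⟨n - k - 1, by omega⟩
        have hA := gb_succ u (k + (m+1)) k
        have IH1 := ih k (by omega)
        have IH2 := ih (k+1) (by omega)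
        have e1 : k + (m+1) - k = m + 1 := by omega
        have e2 : k + (m+1) - (k+1) = m := by omega
        have e3 : k + (m+1) + 1 - (k+1) = m + 1 := by omega
        rw [e1] at IH1
        rw [e2] at IH2
        rw [e3, hA]
        have hPk := Pprod_succ u k
        have hPm := Pprod_succ u m
        have hPn := Pprod_succ u (k + (m+1))
        have hexp : u ^ (k + (m+1) + 1) = u ^ (k+1) * u ^ (m+1) := by
          rw [← pow_add]; congr 1; omega
        linear_combination gb u (k+(m+1)) k * Pprod u (m+1) * hPk
          + (1 - u^(k+1)) * IH1
          + u^(k+1) * gb u (k+(m+1)) (k+1) * Pprod u (k+1) * hPm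
          + u^(k+1) * (1 - u^(m+1)) * IH2
          - hPn + Pprod u (k+(m+1)) * hexp
      · obtain rfl : k = n := by omega
        simp

section Star

variable (q : ℂ)

lemma gb_star_q (N k : ℕ) :
    gb (q^2) (2*N+2) (k+2) = (1 + q^(4*N+2)) * gb (q^2) (2*N) (k+1)
      + q ^ (2*((2*N:ℤ) - (k:ℤ))) * gb (q^2) (2*N) k
      + q^(2*k+4) * gb (q^2) (2*N) (k+2) := by
  rcases Nat.lt_or_ge (k+1) (2*N+1) with hk | hk
  · -- k + 1 ≤ 2N
    have hk' : k ≤ 2*N := by omega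
    have h1 : gb (q^2) (2*N+2) (k+2)
        = gb (q^2) (2*N+1) (k+1) + (q^2)^(k+2) * gb (q^2) (2*N+1) (k+2) :=
      gb_succ (q^2) (2*N+1) (k+1)
    have h2 := gb_R2 (q^2) (2*N) k hk'
    have h3 := gb_R2 (q^2) (2*N) (k+1) (by omega)
    have c1 : ((q:ℂ)^2)^(k+2) = q^(2*k+4) := by ring
    have c2 : ((q:ℂ)^2)^(2*N-k) = q ^ (2*((2*N:ℤ) - (k:ℤ))) := by
      rw [← zpow_natCast (q^2), ← zpow_natCast q 2, ← zpow_mul]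
      congr 1
      omega
    have c3 : ((q:ℂ)^2)^(k+2) * ((q:ℂ)^2)^(2*N-(k+1)) = q^(4*N+2) := by
      rw [← pow_add, ← pow_mul]
      congr 1
      omega
    rw [h1, h2, h3]
    linear_combination gb (q^2) (2*N) k * c2 + gb (q^2) (2*N) (k+2) * c1
      + gb (q^2) (2*N) (k+1) * c3
  · rcases Nat.lt_or_ge (2*N) k with hk2 | hk2
    · -- k > 2N : everything vanishes
      have zL : gb (q^2) (2*N+2) (k+2) = 0 := gb_eq_zero _ (by omega)
      have z0 : gb (q^2) (2*N) k = 0 := gb_eq_zero _ (by omega)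
      have z1 : gb (q^2) (2*N) (k+1) = 0 := gb_eq_zero _ (by omega)
      have z2 : gb (q^2) (2*N) (k+2) = 0 := gb_eq_zero _ (by omega)
      rw [zL, z0, z1, z2]
      ring
    · -- k = 2N
      obtain rfl : k = 2*N := by omega
      have z1 : gb (q^2) (2*N) (2*N+1) = 0 := gb_eq_zero _ (by omega)
      have z2 : gb (q^2) (2*N) (2*N+2) = 0 := gb_eq_zero _ (by omega)
      have d1 : gb (q^2) (2*N+2) (2*N+2) = 1 := gb_diag _ _
      have d0 : gb (q^2) (2*N) (2*N) = 1 := gb_diag _ _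
      rw [d1, z1, z2, d0]
      have : (2 * ((2*N:ℤ) - ((2*N:ℕ):ℤ))) = 0 := by push_cast; ring
      rw [this, zpow_zero]
      ring

/-- The coefficients of the finite Jacobi-type sum. -/
noncomputable def acoef (q : ℂ) (N k : ℕ) : ℂ :=
  gb (q^2) (2*N) k * q ^ (((k:ℤ) - (N:ℤ))^2)

lemma cid (hq0 : q ≠ 0) (N k : ℕ) :
    acoef q (N+1) (k+2) = q^(2*N+1) * acoef q N (k+2)
      + (1+q^(4*N+2)) * acoef q N (k+1) + q^(2*N+1) * acoef q N k := by
  unfold acoef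
  have hEE : ((((k:ℕ)+2:ℕ):ℤ) - (((N+1:ℕ)):ℤ))^2 = (((k:ℤ)+1) - (N:ℤ))^2 := by
    push_cast; ring
  have h2N : 2*(N+1) = 2*N+2 := by ring
  rw [h2N, hEE, gb_star_q]
  have hm0 : q ^ (2*((2*N:ℤ) - (k:ℤ))) * q^((((k:ℤ)+1) - (N:ℤ))^2)
      = q^(2*N+1) * q^((((k:ℕ):ℤ) - (N:ℤ))^2) := by
    rw [← zpow_natCast q (2*N+1), ← zpow_add₀ hq0, ← zpow_add₀ hq0]
    congr 1
    push_cast; ring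
  have hm2 : q^(2*k+4) * q^((((k:ℤ)+1) - (N:ℤ))^2)
      = q^(2*N+1) * q^(((((k+2:ℕ)):ℤ) - (N:ℤ))^2) := by
    rw [← zpow_natCast q (2*k+4), ← zpow_natCast q (2*N+1),
      ← zpow_add₀ hq0, ← zpow_add₀ hq0]
    congr 1
    push_cast; ring
  have hE1 : ((((k+1:ℕ)):ℤ) - (N:ℤ))^2 = (((k:ℤ)+1) - (N:ℤ))^2 := by push_cast; ring
  rw [hE1]
  linear_combination gb (q^2) (2*N) k * hm0 + gb (q^2) (2*N) (k+2) * hm2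

end Star

section Key

variable (q : ℂ)

lemma acoef_top_zero (N k : ℕ) (hk : 2*N < k) : acoef q N k = 0 := by
  unfold acoef; rw [gb_eq_zero _ hk]; ring

lemma cid0 (hq0 : q ≠ 0) (N : ℕ) : acoef q (N+1) 0 = q^(2*N+1) * acoef q N 0 := by
  unfold acoef
  simp only [gb_zero_right, one_mul]
  rw [← zpow_natCast q (2*N+1), ← zpow_add₀ hq0]
  congr 1
  push_cast; ring

lemma cid1 (hq0 : q ≠ 0) (N : ℕ) :
    acoef q (N+1) 1 = q^(2*N+1) * acoef q N 1 + (1+q^(4*N+2)) * acoef q N 0 := by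
  unfold acoef
  have h1 : gb (q^2) (2*(N+1)) 1 = gb (q^2) (2*N+1) 0 + (q^2)^1 * gb (q^2) (2*N+1) 1 :=
    gb_succ (q^2) (2*N+1) 0
  have h2 := gb_R2 (q^2) (2*N) 0 (by omega)
  simp only [Nat.sub_zero, gb_zero_right, mul_one] at h1 h2
  rw [h1, h2]
  simp only [gb_zero_right]
  have hE : (q:ℂ) ^ ((((1:ℕ):ℤ) - ((N+1:ℕ):ℤ))^2) = q ^ ((((0:ℕ):ℤ) - ((N:ℕ):ℤ))^2) := by
    congr 1
    push_cast; ring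
  have hg : (q:ℂ)^2 * q ^ ((((1:ℕ):ℤ) - ((N+1:ℕ):ℤ))^2)
      = q^(2*N+1) * q ^ ((((1:ℕ):ℤ) - ((N:ℕ):ℤ))^2) := by
    rw [← zpow_natCast q 2, ← zpow_natCast q (2*N+1), ← zpow_add₀ hq0, ← zpow_add₀ hq0]
    congr 1
    push_cast; ring
  linear_combination gb (q^2) (2*N) 1 * hg + (1 + (q:ℂ)^(4*N+2)) * hE

lemma key (hq0 : q ≠ 0) (z : ℂ) : ∀ N : ℕ,
    ∑ k ∈ range (2*N+1), acoef q N k * z^k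
      = ∏ k ∈ range N, ((1 + z*q^(2*k+1)) * (z + q^(2*k+1))) := by
  intro N
  induction N with
  | zero =>
    simp only [Nat.mul_zero, Nat.zero_add, Finset.sum_range_one, Finset.range_zero,
      Finset.prod_empty, pow_zero, mul_one]
    unfold acoef
    norm_num
  | succ N ih =>
    have hrange : 2*(N+1)+1 = 2*N+3 := by ring
    rw [hrange, Finset.prod_range_succ, ← ih]
    set S := ∑ k ∈ range (2*N+1), acoef q N k * z^k with hS
    -- expand the big sum
    have e1 : ∑ k ∈ range (2*N+3), acoef q (N+1) k * z^k
        = (∑ k ∈ range (2*N+1), acoef q (N+1) (k+2) * z^(k+2))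
          + acoef q (N+1) 1 * z + acoef q (N+1) 0 := by
      rw [Finset.sum_range_succ' (fun k => acoef q (N+1) k * z^k) (2*N+2),
        Finset.sum_range_succ' (fun k => acoef q (N+1) (k+1) * z^(k+1)) (2*N+1)]
      norm_num
    -- the full sum of acoef N over a longer range equals S
    have eS3 : ∑ k ∈ range (2*N+3), acoef q N k * z^k = S := by
      rw [Finset.sum_range_succ, Finset.sum_range_succ,
        acoef_top_zero q N (2*N+1) (by omega), acoef_top_zero q N (2*N+2) (by omega)]
      ring
    have eS2 : ∑ k ∈ range (2*N+2), acoef q N k * z^k = S := by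
      rw [Finset.sum_range_succ, acoef_top_zero q N (2*N+1) (by omega)]
      ring
    have F2 : ∑ k ∈ range (2*N+1), acoef q N (k+2) * z^(k+2)
        = S - acoef q N 0 - acoef q N 1 * z := by
      have h := Finset.sum_range_succ' (fun k => acoef q N k * z^k) (2*N+2)
      have h' := Finset.sum_range_succ' (fun k => acoef q N (k+1) * z^(k+1)) (2*N+1)
      rw [h', eS3] at h
      simp only [pow_zero, pow_one, mul_one] at h
      linear_combination -h
    have F1 : ∑ k ∈ range (2*N+1), acoef q N (k+1) * z^(k+2)
        = z * (S - acoef q N 0) := by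
      have h := Finset.sum_range_succ' (fun k => acoef q N k * z^k) (2*N+1)
      rw [eS2] at h
      simp only [pow_zero, mul_one] at h
      have : ∑ k ∈ range (2*N+1), acoef q N (k+1) * z^(k+2)
          = z * ∑ k ∈ range (2*N+1), acoef q N (k+1) * z^(k+1) := by
        rw [Finset.mul_sum]
        refine Finset.sum_congr rfl fun k _ => by ring
      rw [this]
      linear_combination -z * h
    have F0 : ∑ k ∈ range (2*N+1), acoef q N k * z^(k+2) = z^2 * S := by
      rw [hS, Finset.mul_sum]
      refine Finset.sum_congr rfl fun k _ => by ring
    have ecid : ∑ k ∈ range (2*N+1), acoef q (N+1) (k+2) * z^(k+2)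
        = q^(2*N+1) * (∑ k ∈ range (2*N+1), acoef q N (k+2) * z^(k+2))
          + (1+q^(4*N+2)) * (∑ k ∈ range (2*N+1), acoef q N (k+1) * z^(k+2))
          + q^(2*N+1) * (∑ k ∈ range (2*N+1), acoef q N k * z^(k+2)) := by
      rw [Finset.mul_sum, Finset.mul_sum, Finset.mul_sum, ← Finset.sum_add_distrib,
        ← Finset.sum_add_distrib]
      refine Finset.sum_congr rfl fun k _ => by
        rw [cid q hq0 N k]; ring
    rw [e1, ecid, F2, F1, F0, cid1 q hq0 N, cid0 q hq0 N]
    ring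
end Key


/-- elementary: `exp (-(x/(1-t))) ≤ 1 - x` for `0 ≤ x ≤ t < 1`. -/
lemma exp_neg_le_one_sub {x t : ℝ} (hx : 0 ≤ x) (hxt : x ≤ t) (ht : t < 1) :
    Real.exp (-(x/(1-t))) ≤ 1 - x := by
  have h1t : (0:ℝ) < 1 - t := by linarith
  have hy : 0 ≤ x/(1-t) := div_nonneg hx h1t.le
  have h := Real.add_one_le_exp (x/(1-t))
  have h1x : (0:ℝ) < 1 - x := by linarith
  rw [Real.exp_neg, inv_le_iff_one_le_mul₀ (Real.exp_pos _)]
  have key : 1 ≤ (x/(1-t) + 1) * (1-x) := by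
    rw [div_add' _ _ _ h1t.ne', div_mul_eq_mul_div, le_div_iff₀ h1t]
    nlinarith
  calc (1:ℝ) ≤ (x/(1-t) + 1) * (1-x) := key
    _ ≤ Real.exp (x/(1-t)) * (1-x) := by
        apply mul_le_mul_of_nonneg_right h h1x.le
    _ = (1-x) * Real.exp (x/(1-t)) := mul_comm _ _

section Prod
variable {a w : ℂ} (ha : ‖a‖ < 1) (hw : ‖w‖ < 1)

include ha hw in
lemma factor_ne_zero (k : ℕ) : 1 - a * w ^ k ≠ 0 := by
  intro h
  have h1 : a * w ^ k = 1 := by linear_combination -h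
  have : ‖a * w ^ k‖ < 1 := by
    rw [norm_mul, norm_pow]
    calc ‖a‖ * ‖w‖^k ≤ ‖a‖ * 1 := by
          apply mul_le_mul_of_nonneg_left _ (norm_nonneg a)
          exact pow_le_one₀ (norm_nonneg w) hw.le
      _ < 1 := by rwa [mul_one]
  rw [h1] at this
  simp at this

include ha hw in
lemma multipliable_one_sub : Multipliable (fun k : ℕ => 1 - a * w ^ k) := by
  apply Complex.multipliable_of_summable_log
  have hgeo : Summable (fun k : ℕ => 3/2 * (‖a‖ * ‖w‖^k)) := by
    apply Summable.mul_left
    exact (summable_geometric_of_lt_one (norm_nonneg w) hw).mul_left _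
  apply Summable.of_norm_bounded_eventually_nat hgeo
  have htend : Tendsto (fun k : ℕ => ‖a‖ * ‖w‖^k) atTop (𝓝 (‖a‖ * 0)) :=
    (tendsto_pow_atTop_nhds_zero_of_lt_one (norm_nonneg w) hw).const_mul _
  rw [mul_zero] at htend
  filter_upwards [htend.eventually_le_const (by norm_num : (0:ℝ) < 1/2)] with k hk
  have hsmall : ‖-(a * w ^ k)‖ ≤ 1/2 := by
    rw [norm_neg, norm_mul, norm_pow]; exact hk
  have : (1 : ℂ) - a * w ^ k = 1 + -(a * w^k) := by ring
  rw [this]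
  calc ‖Complex.log (1 + -(a * w ^ k))‖ ≤ 3/2 * ‖-(a * w^k)‖ :=
        Complex.norm_log_one_add_half_le_self hsmall
    _ = 3/2 * (‖a‖ * ‖w‖^k) := by rw [norm_neg, norm_mul, norm_pow]

include ha hw in
lemma prod_norm_lower (N : ℕ) :
    Real.exp (-(‖a‖ / ((1-‖a‖)*(1-‖w‖)))) ≤ ‖∏ k ∈ range N, (1 - a * w ^ k)‖ := by
  have h0w : (0:ℝ) ≤ ‖w‖ := norm_nonneg w
  have h0a : (0:ℝ) ≤ ‖a‖ := norm_nonneg a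
  rw [norm_prod]
  have step1 : ∏ k ∈ range N, Real.exp (-(‖a‖*‖w‖^k/(1-‖a‖)))
      ≤ ∏ k ∈ range N, ‖1 - a * w ^ k‖ := by
    apply Finset.prod_le_prod (fun k _ => (Real.exp_pos _).le)
    intro k _
    calc Real.exp (-(‖a‖*‖w‖^k/(1-‖a‖))) ≤ 1 - ‖a‖*‖w‖^k := by
          apply exp_neg_le_one_sub (by positivity) _ ha
          calc ‖a‖*‖w‖^k ≤ ‖a‖ * 1 :=
                mul_le_mul_of_nonneg_left (pow_le_one₀ h0w hw.le) h0a
            _ = ‖a‖ := mul_one _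
      _ ≤ ‖(1:ℂ) - a * w ^ k‖ := by
          have h1 : ‖a * w^k‖ = ‖a‖*‖w‖^k := by rw [norm_mul, norm_pow]
          calc 1 - ‖a‖*‖w‖^k = ‖(1:ℂ)‖ - ‖a * w^k‖ := by rw [norm_one, h1]
            _ ≤ ‖(1:ℂ) - a * w^k‖ := norm_sub_norm_le _ _
  refine le_trans ?_ step1
  rw [← Real.exp_sum]
  apply Real.exp_le_exp.mpr
  have hsum : ∑ x ∈ range N, ‖a‖ * ‖w‖ ^ x / (1 - ‖a‖) ≤ ‖a‖ / ((1-‖a‖)*(1-‖w‖)) := by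
    have h1a : (0:ℝ) < 1 - ‖a‖ := by linarith
    have h1w : (0:ℝ) < 1 - ‖w‖ := by linarith
    have hg : ∑ x ∈ range N, ‖w‖ ^ x ≤ (1-‖w‖)⁻¹ := by
      have hs : Summable (fun x : ℕ => ‖w‖ ^ x) := summable_geometric_of_lt_one h0w hw
      calc ∑ x ∈ range N, ‖w‖ ^ x ≤ ∑' x : ℕ, ‖w‖ ^ x :=
            hs.sum_le_tsum _ (fun i _ => by positivity)
        _ = (1-‖w‖)⁻¹ := tsum_geometric_of_lt_one h0w hw
    rw [← Finset.sum_div, ← Finset.mul_sum]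
    rw [div_le_div_iff₀ h1a (by positivity)]
    have := mul_le_mul_of_nonneg_left hg h0a
    calc ‖a‖ * (∑ x ∈ range N, ‖w‖^x) * ((1-‖a‖)*(1-‖w‖))
        ≤ ‖a‖ * (1-‖w‖)⁻¹ * ((1-‖a‖)*(1-‖w‖)) := by
          apply mul_le_mul_of_nonneg_right this (by positivity)
      _ = ‖a‖ * (1-‖a‖) := by
          have hc : (1-‖w‖)⁻¹ * (1-‖w‖) = 1 := inv_mul_cancel₀ h1w.ne'
          linear_combination (‖a‖*(1-‖a‖)) * hc
      _ ≤ ‖a‖ * (1-‖a‖) := le_refl _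
  calc ∑ x ∈ range N, -(‖a‖ * ‖w‖ ^ x / (1-‖a‖)) = -∑ x ∈ range N, ‖a‖ * ‖w‖ ^ x / (1-‖a‖) := by
        rw [Finset.sum_neg_distrib]
    _ ≥ -(‖a‖ / ((1-‖a‖)*(1-‖w‖))) := neg_le_neg hsum

include ha hw in
lemma prod_norm_upper (N : ℕ) :
    ‖∏ k ∈ range N, (1 - a * w ^ k)‖ ≤ Real.exp (‖a‖ * (1-‖w‖)⁻¹) := by
  have h0w : (0:ℝ) ≤ ‖w‖ := norm_nonneg w
  have h0a : (0:ℝ) ≤ ‖a‖ := norm_nonneg a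
  have h1w : (0:ℝ) < 1 - ‖w‖ := by linarith
  rw [norm_prod]
  have step1 : ∏ k ∈ range N, ‖1 - a * w ^ k‖ ≤ ∏ k ∈ range N, Real.exp (‖a‖*‖w‖^k) := by
    apply Finset.prod_le_prod (fun k _ => norm_nonneg _)
    intro k _
    calc ‖(1:ℂ) - a*w^k‖ ≤ ‖(1:ℂ)‖ + ‖a*w^k‖ := norm_sub_le _ _
      _ = 1 + ‖a‖*‖w‖^k := by rw [norm_one, norm_mul, norm_pow]
      _ ≤ Real.exp (‖a‖*‖w‖^k) := by
          have := Real.add_one_le_exp (‖a‖*‖w‖^k)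
          linarith
  refine le_trans step1 ?_
  rw [← Real.exp_sum]
  apply Real.exp_le_exp.mpr
  rw [← Finset.mul_sum]
  have hg : ∑ x ∈ range N, ‖w‖ ^ x ≤ (1-‖w‖)⁻¹ := by
    have hs : Summable (fun x : ℕ => ‖w‖ ^ x) := summable_geometric_of_lt_one h0w hw
    calc ∑ x ∈ range N, ‖w‖ ^ x ≤ ∑' x : ℕ, ‖w‖ ^ x :=
          hs.sum_le_tsum _ (fun i _ => by positivity)
      _ = (1-‖w‖)⁻¹ := tsum_geometric_of_lt_one h0w hw
  exact mul_le_mul_of_nonneg_left hg h0a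

include ha hw in
lemma tprod_norm_lower :
    Real.exp (-(‖a‖ / ((1-‖a‖)*(1-‖w‖)))) ≤ ‖∏' k : ℕ, (1 - a * w ^ k)‖ := by
  have ht : Tendsto (fun N => ‖∏ k ∈ range N, (1 - a * w ^ k)‖) atTop
      (𝓝 ‖∏' k : ℕ, (1 - a * w ^ k)‖) :=
    ((multipliable_one_sub ha hw).hasProd.tendsto_prod_nat).norm
  exact ge_of_tendsto' ht (fun N => prod_norm_lower ha hw N)

include ha hw in
lemma tprod_one_sub_ne_zero : (∏' k : ℕ, (1 - a * w ^ k)) ≠ 0 := by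
  have h := tprod_norm_lower ha hw
  have : (0:ℝ) < ‖∏' k : ℕ, (1 - a * w ^ k)‖ := lt_of_lt_of_le (Real.exp_pos _) h
  simpa using ne_of_gt this

end Prod


section Limits
variable {u : ℂ} (hu : ‖u‖ < 1)

lemma Pprod_eq (N : ℕ) : Pprod u N = ∏ k ∈ range N, (1 - u * u ^ k) :=
  Finset.prod_congr rfl fun k _ => by rw [pow_succ']

include hu in
lemma Pprod_tendsto :
    Tendsto (fun N => Pprod u N) atTop (𝓝 (∏' k : ℕ, (1 - u * u ^ k))) := by
  have := ((multipliable_one_sub hu hu).hasProd.tendsto_prod_nat)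
  exact this.congr fun N => (Pprod_eq N).symm

include hu in
lemma Pprod_norm_lower (N : ℕ) :
    Real.exp (-(‖u‖ / ((1-‖u‖)*(1-‖u‖)))) ≤ ‖Pprod u N‖ := by
  rw [Pprod_eq]; exact prod_norm_lower hu hu N

include hu in
lemma Pprod_norm_upper (N : ℕ) : ‖Pprod u N‖ ≤ Real.exp (‖u‖ * (1-‖u‖)⁻¹) := by
  rw [Pprod_eq]; exact prod_norm_upper hu hu N

include hu in
lemma Pinf_ne_zero : (∏' k : ℕ, (1 - u * u ^ k)) ≠ 0 := tprod_one_sub_ne_zero hu hu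

include hu in
lemma Pprod_ne_zero (N : ℕ) : Pprod u N ≠ 0 := by
  have h := Pprod_norm_lower hu N
  have : (0:ℝ) < ‖Pprod u N‖ := lt_of_lt_of_le (Real.exp_pos _) h
  simpa using ne_of_gt this

/-- uniform bound for Gaussian binomials -/
noncomputable def Cgb (u : ℂ) : ℝ :=
  Real.exp (‖u‖ * (1-‖u‖)⁻¹) / (Real.exp (-(‖u‖ / ((1-‖u‖)*(1-‖u‖)))))^2

lemma Cgb_nonneg (u : ℂ) : 0 ≤ Cgb u := by unfold Cgb; positivity

include hu in
lemma gb_norm_le (n k : ℕ) : ‖gb u n k‖ ≤ Cgb u := by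
  rcases Nat.lt_or_ge n k with h | h
  · rw [gb_eq_zero u h, norm_zero]; exact Cgb_nonneg u
  · have heq := gb_mul_Pprod u n k h
    have hne : Pprod u k * Pprod u (n-k) ≠ 0 :=
      mul_ne_zero (Pprod_ne_zero hu k) (Pprod_ne_zero hu (n-k))
    have hgb : gb u n k = Pprod u n / (Pprod u k * Pprod u (n-k)) := by
      rw [eq_div_iff hne]; exact heq
    rw [hgb, norm_div, norm_mul]
    unfold Cgb
    set δ := Real.exp (-(‖u‖ / ((1-‖u‖)*(1-‖u‖)))) with hδ
    have hδpos : 0 < δ := Real.exp_pos _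
    apply div_le_div₀ (Real.exp_nonneg _) (Pprod_norm_upper hu n) (by positivity)
    calc δ^2 = δ * δ := sq δ
      _ ≤ ‖Pprod u k‖ * ‖Pprod u (n-k)‖ :=
          mul_le_mul (Pprod_norm_lower hu k) (Pprod_norm_lower hu (n-k)) hδpos.le
            (norm_nonneg _)

include hu in
lemma tendsto_gb_central (c : ℕ → ℕ) (h1 : Tendsto c atTop atTop)
    (h2 : Tendsto (fun N => 2*N - c N) atTop atTop)
    (h3 : ∀ᶠ N in atTop, c N ≤ 2*N) :
    Tendsto (fun N => gb u (2*N) (c N)) atTop (𝓝 (∏' k : ℕ, (1 - u * u ^ k))⁻¹) := by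
  set Pinf := ∏' k : ℕ, (1 - u * u ^ k) with hPinf
  have hPne := Pinf_ne_zero hu
  have h2N : Tendsto (fun N : ℕ => 2*N) atTop atTop :=
    tendsto_atTop_mono (fun n => Nat.le_mul_of_pos_left n (by norm_num)) tendsto_id
  have key : Tendsto (fun N => Pprod u (2*N) / (Pprod u (c N) * Pprod u (2*N - c N)))
      atTop (𝓝 (Pinf / (Pinf * Pinf))) := by
    apply Tendsto.div ((Pprod_tendsto hu).comp h2N)
      (((Pprod_tendsto hu).comp h1).mul ((Pprod_tendsto hu).comp h2))
      (mul_ne_zero hPne hPne)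
  have hPP : Pinf / (Pinf * Pinf) = Pinf⁻¹ := by field_simp
  rw [← hPP]
  apply key.congr'
  filter_upwards [h3] with N hN
  have heq := gb_mul_Pprod u (2*N) (c N) hN
  have hne : Pprod u (c N) * Pprod u (2*N - c N) ≠ 0 :=
    mul_ne_zero (Pprod_ne_zero hu _) (Pprod_ne_zero hu _)
  exact ((eq_div_iff hne).mpr heq).symm

end Limits

/-- triangular numbers -/
def T (m : ℕ) : ℕ := m*(m+1)/2

lemma two_T (m : ℕ) : 2 * T m = m*(m+1) := by
  unfold T
  have : 2 ∣ m*(m+1) := (Nat.even_mul_succ_self m).two_dvd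
  omega

lemma T_ge (m : ℕ) : m ≤ T m := by
  unfold T
  cases m with
  | zero => simp
  | succ n =>
    have h1 : (n+1)*2 ≤ (n+1)*(n+1+1) := Nat.mul_le_mul (le_refl (n+1)) (by omega)
    omega

section Folded
variable (q : ℂ)

lemma folded (hq0 : q ≠ 0) (N : ℕ) :
    (∑ m ∈ range (N+1), gb (q^2) (2*N) (N+m) * (q^2)^(T m))
      + ∑ m ∈ range N, gb (q^2) (2*N) (N-1-m) * (q^2)^(T m)
    = (∏ k ∈ range N, (1 + (q^2)^(k+1))) * (∏ k ∈ range N, (1 + (q^2)^k)) := by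
  have hkey := key q hq0 q N
  -- RHS transformation
  have hR : ∏ k ∈ range N, ((1 + q*q^(2*k+1)) * (q + q^(2*k+1)))
      = (∏ k ∈ range N, (1 + (q^2)^(k+1))) * (q^N * ∏ k ∈ range N, (1 + (q^2)^k)) := by
    rw [Finset.prod_mul_distrib]
    congr 1
    · exact Finset.prod_congr rfl fun k _ => by ring
    · have : ∏ k ∈ range N, (q + q^(2*k+1)) = ∏ k ∈ range N, (q * (1 + (q^2)^k)) :=
        Finset.prod_congr rfl fun k _ => by ring
      rw [this, Finset.prod_mul_distrib, Finset.prod_const, Finset.card_range]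
  -- LHS split
  have hsplit : ∑ k ∈ range (2*N+1), acoef q N k * q^k
      = (∑ k ∈ range N, acoef q N k * q^k)
        + ∑ m ∈ range (N+1), acoef q N (N+m) * q^(N+m) := by
    have h2 := Finset.sum_Ico_consecutive (fun k => acoef q N k * q^k)
      (Nat.zero_le N) (by omega : N ≤ 2*N+1)
    have h3 := Finset.sum_Ico_eq_sum_range (f := fun k => acoef q N k * q^k)
      (m := N) (n := 2*N+1)
    rw [show 2*N+1-N = N+1 by omega] at h3
    rw [Finset.range_eq_Ico, ← h2, h3, ← Finset.range_eq_Ico]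
  have hrefl : ∑ k ∈ range N, acoef q N k * q^k
      = ∑ m ∈ range N, acoef q N (N-1-m) * q^(N-1-m) :=
    (Finset.sum_range_reflect (fun k => acoef q N k * q^k) N).symm
  -- pointwise monomial identities
  have hmono1 : ∀ m : ℕ, acoef q N (N+m) * q^(N+m)
      = q^N * (gb (q^2) (2*N) (N+m) * (q^2)^(T m)) := by
    intro m
    unfold acoef
    have hpow : (q:ℂ)^((((N+m:ℕ):ℤ) - ((N:ℕ):ℤ))^2) * q^(N+m)
        = q^N * (q^2)^(T m) := by
      rw [show ((q:ℂ)^2)^(T m) = q^(2*(T m)) from by rw [← pow_mul],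
        ← zpow_natCast q (N+m), ← zpow_natCast q N, ← zpow_natCast q (2*(T m)),
        ← zpow_add₀ hq0, ← zpow_add₀ hq0]
      congr 1
      push_cast [two_T]
      ring
    linear_combination gb (q^2) (2*N) (N+m) * hpow
  have hmono2 : ∀ m : ℕ, m < N → acoef q N (N-1-m) * q^(N-1-m)
      = q^N * (gb (q^2) (2*N) (N-1-m) * (q^2)^(T m)) := by
    intro m hm
    unfold acoef
    have hc : ((N-1-m : ℕ):ℤ) = (N:ℤ)-1-(m:ℤ) := by omega
    have hpow : (q:ℂ)^((((N-1-m:ℕ):ℤ) - ((N:ℕ):ℤ))^2) * q^(N-1-m)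
        = q^N * (q^2)^(T m) := by
      rw [show ((q:ℂ)^2)^(T m) = q^(2*(T m)) from by rw [← pow_mul],
        ← zpow_natCast q (N-1-m), ← zpow_natCast q N, ← zpow_natCast q (2*(T m)),
        ← zpow_add₀ hq0, ← zpow_add₀ hq0]
      congr 1
      rw [hc]
      push_cast [two_T]
      ring
    linear_combination gb (q^2) (2*N) (N-1-m) * hpow
  rw [hsplit, hrefl, hR] at hkey
  have hsum1 : ∑ m ∈ range (N+1), acoef q N (N+m) * q^(N+m)
      = q^N * ∑ m ∈ range (N+1), gb (q^2) (2*N) (N+m) * (q^2)^(T m) := by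
    rw [Finset.mul_sum]
    exact Finset.sum_congr rfl fun m _ => hmono1 m
  have hsum2 : ∑ m ∈ range N, acoef q N (N-1-m) * q^(N-1-m)
      = q^N * ∑ m ∈ range N, gb (q^2) (2*N) (N-1-m) * (q^2)^(T m) := by
    rw [Finset.mul_sum]
    exact Finset.sum_congr rfl fun m hm => hmono2 m (Finset.mem_range.mp hm)
  rw [hsum1, hsum2] at hkey
  apply mul_left_cancel₀ (pow_ne_zero N hq0)
  rw [mul_add]
  linear_combination hkey
end Folded

section CoreLimit
variable {q : ℂ}

lemma core_q (hq : ‖q‖ < 1) (hq0 : q ≠ 0) :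
    (∑' m : ℕ, (q^2)^(T m))
      = (∏' k : ℕ, (1 - q^2 * (q^2)^k)) * (∏' k : ℕ, (1 + q^2 * (q^2)^k))^2 := by
  set u := q^2 with hu_def
  have hu : ‖u‖ < 1 := by
    rw [hu_def, norm_pow]
    exact pow_lt_one₀ (norm_nonneg q) hq (by norm_num)
  have hu0 : u ≠ 0 := pow_ne_zero 2 hq0
  set Pinf := ∏' k : ℕ, (1 - u * u^k) with hPinf_def
  set Qinf := ∏' k : ℕ, (1 + u * u^k) with hQinf_def
  have hPne : Pinf ≠ 0 := Pinf_ne_zero hu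
  have hQmul : Multipliable (fun k : ℕ => 1 + u * u^k) := by
    apply (multipliable_one_sub (a := -u) (by rw [norm_neg]; exact hu) hu).congr
    intro k; ring
  set g : ℕ → ℕ → ℂ := fun N m => gb u (2*N) (N+m) * u^(T m) with hg_def
  set h : ℕ → ℕ → ℂ := fun N m => (if m < N then gb u (2*N) (N-1-m) else 0) * u^(T m)
    with hh_def
  have hbound_sum : Summable (fun m : ℕ => Cgb u * ‖u‖^m) :=
    (summable_geometric_of_lt_one (norm_nonneg u) hu).mul_left _
  have hpowle : ∀ m : ℕ, ‖u^(T m)‖ ≤ ‖u‖^m := by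
    intro m
    rw [norm_pow]
    exact pow_le_pow_of_le_one (norm_nonneg u) hu.le (T_ge m)
  have hgbd : ∀ N m, ‖g N m‖ ≤ Cgb u * ‖u‖^m := by
    intro N m
    rw [hg_def]
    simp only [norm_mul]
    exact mul_le_mul (gb_norm_le hu _ _) (hpowle m) (norm_nonneg _) (Cgb_nonneg u)
  have hhbd : ∀ N m, ‖h N m‖ ≤ Cgb u * ‖u‖^m := by
    intro N m
    rw [hh_def]
    simp only [norm_mul]
    split_ifs with hc
    · exact mul_le_mul (gb_norm_le hu _ _) (hpowle m) (norm_nonneg _) (Cgb_nonneg u)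
    · rw [norm_zero, zero_mul]
      exact mul_nonneg (Cgb_nonneg u) (pow_nonneg (norm_nonneg u) m)
  have hglim : ∀ m : ℕ, Tendsto (fun N => g N m) atTop (𝓝 (Pinf⁻¹ * u^(T m))) := by
    intro m
    apply Tendsto.mul_const
    apply tendsto_gb_central hu (fun N => N+m) (tendsto_add_atTop_nat m)
    · apply tendsto_atTop_mono (fun N => (by omega : N - m ≤ 2*N - (N+m)))
        (tendsto_sub_atTop_nat m)
    · exact eventually_atTop.2 ⟨m, fun N hN => by omega⟩
  have hhlim : ∀ m : ℕ, Tendsto (fun N => h N m) atTop (𝓝 (Pinf⁻¹ * u^(T m))) := by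
    intro m
    have hbase : Tendsto (fun N => gb u (2*N) (N-1-m) * u^(T m)) atTop
        (𝓝 (Pinf⁻¹ * u^(T m))) := by
      apply Tendsto.mul_const
      apply tendsto_gb_central hu (fun N => N-1-m)
      · exact (tendsto_sub_atTop_nat (1+m)).congr (fun N => by omega)
      · exact tendsto_atTop_mono (fun N => (by omega : N ≤ 2*N - (N-1-m))) tendsto_id
      · exact Eventually.of_forall (fun N => by omega)
    apply hbase.congr'
    filter_upwards [eventually_gt_atTop m] with N hN
    rw [hh_def]
    simp only [if_pos hN]
  have hA : Tendsto (fun N => ∑' m, g N m) atTop (𝓝 (∑' m, Pinf⁻¹ * u^(T m))) :=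
    tendsto_tsum_of_dominated_convergence hbound_sum hglim
      (Eventually.of_forall (fun N m => hgbd N m))
  have hB : Tendsto (fun N => ∑' m, h N m) atTop (𝓝 (∑' m, Pinf⁻¹ * u^(T m))) :=
    tendsto_tsum_of_dominated_convergence hbound_sum hhlim
      (Eventually.of_forall (fun N m => hhbd N m))
  -- identify the finite sums with the folded identity
  have hfin : ∀ N : ℕ, (∑' m, g N m) + (∑' m, h N m)
      = (∏ k ∈ range N, (1 + u^(k+1))) * (∏ k ∈ range N, (1 + u^k)) := by
    intro N
    have h1 : ∑' m, g N m = ∑ m ∈ range (N+1), gb u (2*N) (N+m) * u^(T m) := by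
      apply tsum_eq_sum
      intro m hm
      have hlt : 2*N < N + m := by
        simp only [Finset.mem_range] at hm
        omega
      simp only [hg_def, gb_eq_zero u hlt, zero_mul]
    have h2 : ∑' m, h N m = ∑ m ∈ range N, gb u (2*N) (N-1-m) * u^(T m) := by
      have h2' : ∑' m, h N m = ∑ m ∈ range N, h N m := by
        apply tsum_eq_sum
        intro m hm
        have hNm : ¬ (m < N) := by simp only [Finset.mem_range] at hm; omega
        simp only [hh_def, if_neg hNm, zero_mul]
      rw [h2']
      apply Finset.sum_congr rfl
      intro m hm
      simp only [hh_def, if_pos (Finset.mem_range.mp hm)]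
    rw [h1, h2, hu_def]
    exact folded q hq0 N
  have hQ1 : Tendsto (fun N => ∏ k ∈ range N, (1 + u^(k+1))) atTop (𝓝 Qinf) := by
    apply (hQmul.hasProd.tendsto_prod_nat).congr
    intro N
    exact Finset.prod_congr rfl fun k _ => by rw [pow_succ']
  have hQ2 : Tendsto (fun N => ∏ k ∈ range N, (1 + u^k)) atTop (𝓝 (Qinf * 2)) := by
    apply (tendsto_add_atTop_iff_nat 1).mp
    have hstep : ∀ N : ℕ, ∏ k ∈ range (N+1), (1 + u^k)
        = (∏ k ∈ range N, (1 + u^(k+1))) * 2 := by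
      intro N
      rw [Finset.prod_range_succ']
      norm_num
    exact ((hQ1.mul_const 2).congr (fun N => (hstep N).symm))
  have hRlim : Tendsto
      (fun N => (∏ k ∈ range N, (1 + u^(k+1))) * (∏ k ∈ range N, (1 + u^k)))
      atTop (𝓝 (Qinf * (Qinf * 2))) := hQ1.mul hQ2
  have hLlim : Tendsto
      (fun N => (∏ k ∈ range N, (1 + u^(k+1))) * (∏ k ∈ range N, (1 + u^k)))
      atTop (𝓝 ((∑' m, Pinf⁻¹ * u^(T m)) + (∑' m, Pinf⁻¹ * u^(T m)))) :=
    (hA.add hB).congr (fun N => hfin N)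
  have huniq := tendsto_nhds_unique hLlim hRlim
  rw [tsum_mul_left] at huniq
  have hcancel : Pinf * Pinf⁻¹ = 1 := mul_inv_cancel₀ hPne
  have h2 : Pinf⁻¹ * (∑' m, u^(T m)) = Qinf^2 := by linear_combination huniq/2
  linear_combination Pinf * h2 - (∑' m : ℕ, u^(T m)) * hcancel
end CoreLimit

lemma core_all (v : ℂ) (hv : ‖v‖ < 1) :
    (∑' m : ℕ, v^(T m)) = (∏' k : ℕ, (1 - v * v^k)) * (∏' k : ℕ, (1 + v * v^k))^2 := by
  rcases eq_or_ne v 0 with rfl | hv0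
  · have hL : (∑' m : ℕ, (0:ℂ)^(T m)) = 1 := by
      rw [tsum_eq_single 0]
      · norm_num [T]
      · intro m hm
        have : T m ≠ 0 := by have := T_ge m; omega
        exact zero_pow this
    rw [hL]
    norm_num
  · set s := Complex.exp (Complex.log v / 2) with hs_def
    have hs0 : s ≠ 0 := Complex.exp_ne_zero _
    have hs2 : s^2 = v := by
      rw [hs_def, ← Complex.exp_nat_mul]
      have : (2:ℕ) * (Complex.log v / 2) = Complex.log v := by push_cast; ring
      rw [this, Complex.exp_log hv0]
    have hsn : ‖s‖ < 1 := by
      rw [hs_def, Complex.norm_exp]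
      have hre : (Complex.log v / 2).re = Real.log ‖v‖ / 2 := by
        rw [Complex.div_re]
        simp [Complex.log_re]
        ring
      rw [hre]
      apply Real.exp_lt_one_iff.mpr
      have hpos : 0 < ‖v‖ := norm_pos_iff.mpr hv0
      have : Real.log ‖v‖ < 0 :=
        Real.log_neg hpos hv
      linarith
    have h := core_q hsn hs0
    rw [hs2] at h
    exact h

end GaussAux


theorem gauss_psi (q : ℂ) (hq : ‖q‖ < 1) :
    ∑' n : ℕ, q ^ (n * (n + 1) / 2) = qPochInf (q ^ 2) (q ^ 2) / qPochInf q (q ^ 2) := by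
  have hv : ‖q‖ < 1 := by exact hq
  have hw2 : ‖q^2‖ < 1 := by
    rw [norm_pow]
    exact pow_lt_one₀ (norm_nonneg q) hv (by norm_num)
  set P := ∏' k : ℕ, (1 - q * q^k) with hP_def
  set Q := ∏' k : ℕ, (1 + q * q^k) with hQ_def
  set E := qPochInf (q^2) (q^2) with hE_def
  set O := qPochInf q (q^2) with hO_def
  have hEfac : E = ∏' k : ℕ, (1 - q^2 * (q^2)^k) := rfl
  have hOfac : O = ∏' k : ℕ, (1 - q * (q^2)^k) := rfl
  have hPmul : Multipliable (fun k : ℕ => 1 - q * q^k) :=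
    GaussAux.multipliable_one_sub hv hv
  have hQmul : Multipliable (fun k : ℕ => 1 + q * q^k) := by
    apply (GaussAux.multipliable_one_sub (a := -q) (by rw [norm_neg]; exact hv) hv).congr
    intro k; ring
  have hOmul : Multipliable (fun k : ℕ => 1 - q * (q^2)^k) :=
    GaussAux.multipliable_one_sub hv hw2
  have hEmul : Multipliable (fun k : ℕ => 1 - q^2 * (q^2)^k) :=
    GaussAux.multipliable_one_sub hw2 hw2
  have hPne : P ≠ 0 := GaussAux.tprod_one_sub_ne_zero hv hv
  have hOne : O ≠ 0 := by rw [hOfac]; exact GaussAux.tprod_one_sub_ne_zero hv hw2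
  -- P * Q = E
  have h1 : P * Q = E := by
    rw [hP_def, hQ_def, hEfac, ← Multipliable.tprod_mul hPmul hQmul]
    apply tprod_congr
    intro k
    ring
  -- O * E = P
  have h2 : O * E = P := by
    rw [hOfac, hEfac, hP_def]
    have he : Multipliable (fun k : ℕ => 1 - q * q^(2*k)) := by
      apply hOmul.congr
      intro k
      rw [pow_mul]
    have ho : Multipliable (fun k : ℕ => 1 - q * q^(2*k+1)) := by
      apply hEmul.congr
      intro k
      rw [pow_add, pow_mul, pow_one]
      ring
    have h := tprod_even_mul_odd he ho (f := fun k => 1 - q * q^k)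
    calc (∏' k : ℕ, (1 - q * (q^2)^k)) * ∏' k : ℕ, (1 - q^2 * (q^2)^k)
        = (∏' k : ℕ, (1 - q * q^(2*k))) * ∏' k : ℕ, (1 - q * q^(2*k+1)) := by
          congr 1
          · exact tprod_congr fun k => by rw [pow_mul]
          · exact tprod_congr fun k => by rw [pow_add, pow_mul, pow_one]; ring
      _ = ∏' k : ℕ, (1 - q * q^k) := h
  -- the sum
  have h3 := GaussAux.core_all q hv
  have hT : (∑' n : ℕ, q ^ (n * (n + 1) / 2)) = ∑' m : ℕ, q^(GaussAux.T m) := rfl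
  rw [hT, h3, eq_div_iff hOne]
  apply mul_right_cancel₀ hPne
  linear_combination (P*Q + E)*O*h1 + E*h2
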